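/- There exists a unique continuously differentiable function f̂ : [0,T] → ℝ such that for every t ∈ [0,T], f̂(t)·γ₀·Ĥ₂[f̂](t) = Ĥ₁[f̂](t) + γ₀·(Ĝ₁[f̂](t)² − Ĥ₂[f̂](t)); note that the denominator γ₀·Ĥ₂[f̂](t) is automatically strictly positive. (Corollary 2: the equation system (40) characterizing the robust equilibrium investment strategy of the ambiguity-averse mean-variance investor without skewness preference, i.e. the case φ₀ = 0 of Theorem 4.1.) -/

import Mathlib

open MeasureTheory Set

/-- `Ĝ₁[f](t) = exp(∫_t^T (r(s) + Θ(s) f(s)/(ξ+1)²) ds)`. -/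
noncomputable def G1h (T ξ : ℝ) (r Θ f : ℝ → ℝ) (t : ℝ) : ℝ :=
  Real.exp (∫ s in t..T, r s + Θ s * f s / (ξ + 1) ^ 2)

/-- `Ĥ₂[f](t) = exp(∫_t^T (2r(s) + 2Θ(s)f(s)/(ξ+1)² + Θ(s)f(s)²/(ξ+1)²) ds)`. -/
noncomputable def H2h (T ξ : ℝ) (r Θ f : ℝ → ℝ) (t : ℝ) : ℝ :=
  Real.exp (∫ s in t..T,
    2 * r s + 2 * Θ s * f s / (ξ + 1) ^ 2 + Θ s * f s ^ 2 / (ξ + 1) ^ 2)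

/-- `Ĥ₁[f](t) = Ĝ₁[f](t) + ∫_t^T (ξΘ(s)f(s)²/(2(ξ+1)²)) γ₀ Ĥ₂[f](s)
  exp(∫_t^s (r(u) + Θ(u)f(u)/(ξ+1)²) du) ds`. -/
noncomputable def H1h (T ξ γ₀ : ℝ) (r Θ f : ℝ → ℝ) (t : ℝ) : ℝ :=
  G1h T ξ r Θ f t +
    ∫ s in t..T,
      (ξ * Θ s * f s ^ 2 / (2 * (ξ + 1) ^ 2)) * (γ₀ * H2h T ξ r Θ f s) *
        Real.exp (∫ u in t..s, r u + Θ u * f u / (ξ + 1) ^ 2)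

/-- `f` is a C¹ solution on `[0,T]` of the equation system (40) of the
ambiguity-averse mean-variance investor without skewness preference. -/
def SolvesMVIE (T ξ γ₀ : ℝ) (r Θ f : ℝ → ℝ) : Prop :=
  ContDiffOn ℝ 1 f (Set.Icc 0 T) ∧
    ∀ t ∈ Set.Icc 0 T,
      f t * (γ₀ * H2h T ξ r Θ f t) =
        H1h T ξ γ₀ r Θ f t + γ₀ * (G1h T ξ r Θ f t ^ 2 - H2h T ξ r Θ f t)

namespace MVAux

open intervalIntegral Function

/-! ### Auxiliary definitions -/

/-- integrand of `P`. -/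
noncomputable def psiF (ξ : ℝ) (R V f : ℝ → ℝ) (s : ℝ) : ℝ :=
  R s + V s * (f s + f s ^ 2) / (ξ + 1) ^ 2

/-- integrand of `Q`. -/
noncomputable def qF (ξ : ℝ) (V f : ℝ → ℝ) (s : ℝ) : ℝ :=
  V s * f s ^ 2 / (ξ + 1) ^ 2

noncomputable def PF (ξ : ℝ) (R V f : ℝ → ℝ) (t : ℝ) : ℝ :=
  ∫ s in (0:ℝ)..t, psiF ξ R V f s

noncomputable def QF (ξ : ℝ) (V f : ℝ → ℝ) (t : ℝ) : ℝ :=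
  ∫ s in (0:ℝ)..t, qF ξ V f s

/-- The fixed-point map. -/
noncomputable def Phi (T ξ γ₀ : ℝ) (R V f : ℝ → ℝ) (t : ℝ) : ℝ :=
  (1 / γ₀) * Real.exp (PF ξ R V f t - PF ξ R V f T)
    + (ξ / (2 * (ξ + 1) ^ 2)) *
        (∫ s in t..T, V s * f s ^ 2 * Real.exp (PF ξ R V f t - PF ξ R V f s))
    + Real.exp (QF ξ V f t - QF ξ V f T) - 1

/-- exp is Lipschitz on `(-∞, c]`. -/
lemma exp_lip {x y c : ℝ} (hx : x ≤ c) (hy : y ≤ c) :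
    |Real.exp x - Real.exp y| ≤ Real.exp c * |x - y| := by
  wlog h : y ≤ x generalizing x y
  · rw [abs_sub_comm, abs_sub_comm x y]; exact this hy hx (le_of_not_ge h)
  rw [abs_of_nonneg (sub_nonneg.2 (Real.exp_le_exp.2 h)), abs_of_nonneg (sub_nonneg.2 h)]
  have h1 : Real.exp (y - x) * Real.exp x = Real.exp y := by rw [← Real.exp_add]; ring_nf
  have h2 := Real.add_one_le_exp (y - x)
  have h3 : Real.exp x ≤ Real.exp c := Real.exp_le_exp.2 hx
  nlinarith [Real.exp_pos x]

lemma uIcc_subset {T u v : ℝ} (hu : u ∈ Icc (0:ℝ) T) (hv : v ∈ Icc (0:ℝ) T) :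
    uIcc u v ⊆ Icc (0:ℝ) T := by
  rw [uIcc]
  exact Icc_subset_Icc (le_inf hu.1 hv.1) (sup_le hu.2 hv.2)

lemma int_on {T : ℝ} {g : ℝ → ℝ} (hg : ContinuousOn g (Icc 0 T)) {u v : ℝ}
    (hu : u ∈ Icc (0:ℝ) T) (hv : v ∈ Icc (0:ℝ) T) :
    IntervalIntegrable g volume u v :=
  (hg.mono (uIcc_subset hu hv)).intervalIntegrable

/-- FTC-1 for continuous integrands. -/
lemma primitive_hasDerivAt {g : ℝ → ℝ} (hg : Continuous g) (t : ℝ) :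
    HasDerivAt (fun u => ∫ s in (0:ℝ)..u, g s) (g t) t :=
  integral_hasDerivAt_right (hg.intervalIntegrable 0 t)
    (hg.stronglyMeasurable.stronglyMeasurableAtFilter) hg.continuousAt

lemma primitive_contDiff {g : ℝ → ℝ} (hg : Continuous g) :
    ContDiff ℝ 1 (fun u => ∫ s in (0:ℝ)..u, g s) := by
  rw [contDiff_one_iff_deriv]
  refine ⟨fun t => (primitive_hasDerivAt hg t).differentiableAt, ?_⟩
  have : deriv (fun u => ∫ s in (0:ℝ)..u, g s) = g :=
    funext fun t => (primitive_hasDerivAt hg t).deriv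
  rw [this]; exact hg

/-! ### The master identity -/

set_option maxHeartbeats 2000000 in
theorem master {T ξ γ₀ : ℝ} {r Θ f : ℝ → ℝ} (hγ : γ₀ ≠ 0)
    (hr : ContinuousOn r (Icc 0 T)) (hΘ : ContinuousOn Θ (Icc 0 T))
    (hf : ContinuousOn f (Icc 0 T)) {t : ℝ} (ht : t ∈ Icc 0 T) :
    H1h T ξ γ₀ r Θ f t + γ₀ * (G1h T ξ r Θ f t ^ 2 - H2h T ξ r Θ f t)
      = γ₀ * H2h T ξ r Θ f t * Phi T ξ γ₀ r Θ f t := by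
  obtain ⟨ht0, htT⟩ := ht
  have ht : t ∈ Icc (0:ℝ) T := ⟨ht0, htT⟩
  have hTmem : T ∈ Icc (0:ℝ) T := ⟨ht0.trans htT, le_refl T⟩
  have h0mem : (0:ℝ) ∈ Icc (0:ℝ) T := ⟨le_refl 0, ht0.trans htT⟩
  have hbc : ContinuousOn (fun s => r s + Θ s * f s / (ξ + 1) ^ 2) (Icc 0 T) :=
    hr.add ((hΘ.mul hf).div_const _)
  have hac : ContinuousOn
      (fun s => 2 * r s + 2 * Θ s * f s / (ξ + 1) ^ 2 + Θ s * f s ^ 2 / (ξ + 1) ^ 2)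
      (Icc 0 T) :=
    ((continuousOn_const.mul hr).add
      (((continuousOn_const.mul hΘ).mul hf).div_const _)).add
      ((hΘ.mul (hf.pow 2)).div_const _)
  have hψc : ContinuousOn (psiF ξ r Θ f) (Icc 0 T) := by
    unfold psiF
    exact hr.add ((hΘ.mul (hf.add (hf.pow 2))).div_const _)
  have hqc : ContinuousOn (qF ξ Θ f) (Icc 0 T) := by
    unfold qF
    exact (hΘ.mul (hf.pow 2)).div_const _
  -- difference of `PF`
  have ePF : ∀ {u : ℝ}, u ∈ Icc (0:ℝ) T →
      PF ξ r Θ f t - PF ξ r Θ f u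
        = (∫ s in t..u, r s + Θ s * f s / (ξ + 1) ^ 2)
          - (∫ s in t..u,
              2 * r s + 2 * Θ s * f s / (ξ + 1) ^ 2 + Θ s * f s ^ 2 / (ξ + 1) ^ 2) := by
    intro u hu
    have h1 : PF ξ r Θ f u - PF ξ r Θ f t = ∫ s in t..u, psiF ξ r Θ f s :=
      integral_interval_sub_left (int_on hψc h0mem hu) (int_on hψc h0mem ht)
    have h2 : (∫ s in t..u, psiF ξ r Θ f s)
        = (∫ s in t..u,
            2 * r s + 2 * Θ s * f s / (ξ + 1) ^ 2 + Θ s * f s ^ 2 / (ξ + 1) ^ 2)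
          - (∫ s in t..u, r s + Θ s * f s / (ξ + 1) ^ 2) := by
      rw [← integral_sub (int_on hac ht hu) (int_on hbc ht hu)]
      refine integral_congr fun s _ => ?_
      simp only [psiF]; ring
    linarith
  have eQF : QF ξ Θ f t - QF ξ Θ f T
      = 2 * (∫ s in t..T, r s + Θ s * f s / (ξ + 1) ^ 2)
        - (∫ s in t..T,
            2 * r s + 2 * Θ s * f s / (ξ + 1) ^ 2 + Θ s * f s ^ 2 / (ξ + 1) ^ 2) := by
    have h1 : QF ξ Θ f T - QF ξ Θ f t = ∫ s in t..T, qF ξ Θ f s :=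
      integral_interval_sub_left (int_on hqc h0mem hTmem) (int_on hqc h0mem ht)
    have h2 : (∫ s in t..T, qF ξ Θ f s)
        = (∫ s in t..T,
            2 * r s + 2 * Θ s * f s / (ξ + 1) ^ 2 + Θ s * f s ^ 2 / (ξ + 1) ^ 2)
          - 2 * (∫ s in t..T, r s + Θ s * f s / (ξ + 1) ^ 2) := by
      rw [← intervalIntegral.integral_const_mul,
        ← integral_sub (int_on hac ht hTmem) ((int_on hbc ht hTmem).const_mul 2)]
      refine integral_congr fun s _ => ?_
      simp only [qF]; ring
    linarith
  -- the three pieces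
  have hA : γ₀ * H2h T ξ r Θ f t * ((1 / γ₀) * Real.exp (PF ξ r Θ f t - PF ξ r Θ f T))
      = G1h T ξ r Θ f t := by
    rw [ePF hTmem, G1h, H2h]
    rw [show (∫ s in t..T, r s + Θ s * f s / (ξ + 1) ^ 2)
          - (∫ s in t..T,
              2 * r s + 2 * Θ s * f s / (ξ + 1) ^ 2 + Θ s * f s ^ 2 / (ξ + 1) ^ 2)
        = -((∫ s in t..T,
              2 * r s + 2 * Θ s * f s / (ξ + 1) ^ 2 + Θ s * f s ^ 2 / (ξ + 1) ^ 2)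
            - (∫ s in t..T, r s + Θ s * f s / (ξ + 1) ^ 2)) by ring]
    rw [Real.exp_neg, Real.exp_sub]
    field_simp
  have hC : γ₀ * H2h T ξ r Θ f t * Real.exp (QF ξ Θ f t - QF ξ Θ f T)
      = γ₀ * G1h T ξ r Θ f t ^ 2 := by
    have e : Real.exp (∫ s in t..T,
          2 * r s + 2 * Θ s * f s / (ξ + 1) ^ 2 + Θ s * f s ^ 2 / (ξ + 1) ^ 2)
        * Real.exp (QF ξ Θ f t - QF ξ Θ f T)
        = Real.exp (∫ s in t..T, r s + Θ s * f s / (ξ + 1) ^ 2) ^ 2 := by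
      rw [eQF, ← Real.exp_add, ← Real.exp_nat_mul]
      congr 1
      push_cast
      ring
    rw [H2h, G1h]
    linear_combination γ₀ * e
  have hB : γ₀ * H2h T ξ r Θ f t * ((ξ / (2 * (ξ + 1) ^ 2)) *
        (∫ s in t..T, Θ s * f s ^ 2 * Real.exp (PF ξ r Θ f t - PF ξ r Θ f s)))
      = ∫ s in t..T,
          (ξ * Θ s * f s ^ 2 / (2 * (ξ + 1) ^ 2)) * (γ₀ * H2h T ξ r Θ f s) *
            Real.exp (∫ u in t..s, r u + Θ u * f u / (ξ + 1) ^ 2) := by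
    rw [show γ₀ * H2h T ξ r Θ f t * ((ξ / (2 * (ξ + 1) ^ 2)) *
          (∫ s in t..T, Θ s * f s ^ 2 * Real.exp (PF ξ r Θ f t - PF ξ r Θ f s)))
        = (γ₀ * H2h T ξ r Θ f t * (ξ / (2 * (ξ + 1) ^ 2))) *
          (∫ s in t..T, Θ s * f s ^ 2 * Real.exp (PF ξ r Θ f t - PF ξ r Θ f s)) by ring,
      ← intervalIntegral.integral_const_mul]
    refine integral_congr fun s hs => ?_
    rw [uIcc_of_le htT] at hs
    have hsI : s ∈ Icc (0:ℝ) T := ⟨ht0.trans hs.1, hs.2⟩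
    have hts : t ∈ Icc (0:ℝ) T := ht
    have eA : (∫ u in t..T,
          2 * r u + 2 * Θ u * f u / (ξ + 1) ^ 2 + Θ u * f u ^ 2 / (ξ + 1) ^ 2)
        = (∫ u in t..s,
            2 * r u + 2 * Θ u * f u / (ξ + 1) ^ 2 + Θ u * f u ^ 2 / (ξ + 1) ^ 2)
          + ∫ u in s..T,
              2 * r u + 2 * Θ u * f u / (ξ + 1) ^ 2 + Θ u * f u ^ 2 / (ξ + 1) ^ 2 :=
      (integral_add_adjacent_intervals (int_on hac hts hsI) (int_on hac hsI hTmem)).symm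
    have eexp : H2h T ξ r Θ f t * Real.exp (PF ξ r Θ f t - PF ξ r Θ f s)
        = H2h T ξ r Θ f s * Real.exp (∫ u in t..s, r u + Θ u * f u / (ξ + 1) ^ 2) := by
      rw [H2h, H2h, ← Real.exp_add, ← Real.exp_add, ePF hsI, eA]
      congr 1
      ring
    linear_combination (γ₀ * (ξ / (2 * (ξ + 1) ^ 2)) * (Θ s * f s ^ 2)) * eexp
  rw [H1h, MVAux.Phi]
  linear_combination -hA - hB - hC

/-- The equation of `SolvesMVIE` is equivalent to the fixed point equation. -/
theorem eq_iff_phi {T ξ γ₀ : ℝ} {r Θ f : ℝ → ℝ} (hγ : 0 < γ₀)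
    (hr : ContinuousOn r (Icc 0 T)) (hΘ : ContinuousOn Θ (Icc 0 T))
    (hf : ContinuousOn f (Icc 0 T)) {t : ℝ} (ht : t ∈ Icc 0 T) :
    (f t * (γ₀ * H2h T ξ r Θ f t) =
        H1h T ξ γ₀ r Θ f t + γ₀ * (G1h T ξ r Θ f t ^ 2 - H2h T ξ r Θ f t))
    ↔ f t = Phi T ξ γ₀ r Θ f t := by
  rw [master hγ.ne' hr hΘ hf ht]
  have hne : γ₀ * H2h T ξ r Θ f t ≠ 0 := by
    have : 0 < H2h T ξ r Θ f t := Real.exp_pos _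
    positivity
  constructor
  · intro h
    exact mul_left_cancel₀ hne (by linear_combination h)
  · intro h
    rw [h]; ring

/-- `Phi` only depends on values on `[0,T]`. -/
theorem Phi_congr {T ξ γ₀ : ℝ} {r r' Θ Θ' f f' : ℝ → ℝ} (hT : (0:ℝ) ≤ T)
    (hr : EqOn r r' (Icc 0 T)) (hΘ : EqOn Θ Θ' (Icc 0 T)) (hf : EqOn f f' (Icc 0 T))
    {t : ℝ} (ht : t ∈ Icc 0 T) :
    Phi T ξ γ₀ r Θ f t = Phi T ξ γ₀ r' Θ' f' t := by
  have hTmem : T ∈ Icc (0:ℝ) T := ⟨hT, le_refl T⟩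
  have h0mem : (0:ℝ) ∈ Icc (0:ℝ) T := ⟨le_refl 0, hT⟩
  have hPF : ∀ u ∈ Icc (0:ℝ) T, PF ξ r Θ f u = PF ξ r' Θ' f' u := by
    intro u hu
    refine integral_congr fun s hs => ?_
    have hsI : s ∈ Icc (0:ℝ) T := uIcc_subset h0mem hu hs
    simp only [psiF]
    rw [hr hsI, hΘ hsI, hf hsI]
  have hQF : ∀ u ∈ Icc (0:ℝ) T, QF ξ Θ f u = QF ξ Θ' f' u := by
    intro u hu
    refine integral_congr fun s hs => ?_
    have hsI : s ∈ Icc (0:ℝ) T := uIcc_subset h0mem hu hs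
    simp only [qF]
    rw [hΘ hsI, hf hsI]
  have hInt : (∫ s in t..T, Θ s * f s ^ 2 * Real.exp (PF ξ r Θ f t - PF ξ r Θ f s))
      = ∫ s in t..T, Θ' s * f' s ^ 2 * Real.exp (PF ξ r' Θ' f' t - PF ξ r' Θ' f' s) := by
    refine integral_congr fun s hs => ?_
    have hsI : s ∈ Icc (0:ℝ) T := uIcc_subset ht hTmem hs
    rw [hΘ hsI, hf hsI, hPF t ht, hPF s hsI]
  simp only [MVAux.Phi]
  rw [hInt, hPF t ht, hPF T hTmem, hQF t ht, hQF T hTmem]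

end MVAux



section AnalysisProofs
open MeasureTheory Set intervalIntegral Function MVAux

noncomputable def Mbd (T ξ γ₀ Cr CV : ℝ) : ℝ :=
  (1 / γ₀) * Real.exp ((Cr + CV) * T) + ξ * Real.exp ((Cr + CV) * T) + 2

noncomputable def LLc (T ξ γ₀ Cr CV M : ℝ) : ℝ :=
  (1 / γ₀) * Real.exp ((Cr + CV) * T) * (CV * (1 + 2 * M))
    + (ξ / (2 * (ξ + 1) ^ 2)) * Real.exp ((Cr + CV) * T) *
        (2 * CV * M + CV * M ^ 2 * (CV * (1 + 2 * M)) * T)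
    + CV * (1 + 2 * M)

variable {T ξ γ₀ Cr CV : ℝ} {R V : ℝ → ℝ}
variable (hξ : 0 < ξ) (hR : Continuous R) (hV : Continuous V) (hV0 : ∀ s, 0 ≤ V s)
  (hCr : ∀ s, |R s| ≤ Cr) (hCV : ∀ s, |V s| ≤ CV)

include hξ hR hV hV0 hCr hCV

theorem psi_cont' {f : ℝ → ℝ} (hf : Continuous f) : Continuous (psiF ξ R V f) := by
  unfold psiF
  exact hR.add ((hV.mul (hf.add (hf.pow 2))).div_const _)

theorem q_cont' {f : ℝ → ℝ} (hf : Continuous f) : Continuous (qF ξ V f) := by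
  unfold qF
  exact (hV.mul (hf.pow 2)).div_const _

theorem qF_nonneg' {f : ℝ → ℝ} (s : ℝ) : 0 ≤ qF ξ V f s :=
  div_nonneg (mul_nonneg (hV0 s) (sq_nonneg _)) (sq_nonneg _)

theorem QF_mono' {f : ℝ → ℝ} (hf : Continuous f) {u v : ℝ} (huv : u ≤ v) :
    QF ξ V f u ≤ QF ξ V f v := by
  have h1 : QF ξ V f v - QF ξ V f u = ∫ s in u..v, qF ξ V f s :=
    integral_interval_sub_left ((q_cont' hξ hR hV hV0 hCr hCV hf).intervalIntegrable 0 v)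
      ((q_cont' hξ hR hV hV0 hCr hCV hf).intervalIntegrable 0 u)
  have h2 : 0 ≤ ∫ s in u..v, qF ξ V f s :=
    integral_nonneg huv fun s _ => qF_nonneg' hξ hR hV hV0 hCr hCV s
  linarith

theorem QF_diff' {f : ℝ → ℝ} (hf : Continuous f) (u v : ℝ) :
    QF ξ V f v - QF ξ V f u = ∫ s in u..v, qF ξ V f s :=
  integral_interval_sub_left ((q_cont' hξ hR hV hV0 hCr hCV hf).intervalIntegrable 0 v)
    ((q_cont' hξ hR hV hV0 hCr hCV hf).intervalIntegrable 0 u)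

theorem psi_lower' {f : ℝ → ℝ} (s : ℝ) :
    qF ξ V f s / 2 - (Cr + CV) ≤ psiF ξ R V f s := by
  have hc : (0:ℝ) < (ξ + 1) ^ 2 := pow_pos (by linarith) 2
  have h1 : (1:ℝ) ≤ (ξ + 1) ^ 2 := by nlinarith
  have h2 : V s ≤ CV := (abs_le.1 (hCV s)).2
  have h3 : -Cr ≤ R s := neg_le_of_abs_le (hCr s)
  have hA : 0 ≤ V s * (f s + 1) ^ 2 / (ξ + 1) ^ 2 :=
    div_nonneg (mul_nonneg (hV0 s) (sq_nonneg _)) hc.le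
  have hB : V s / (ξ + 1) ^ 2 ≤ CV := le_trans (div_le_self (hV0 s) h1) h2
  have expand : psiF ξ R V f s - qF ξ V f s / 2
      = R s + V s * (f s + 1) ^ 2 / (ξ + 1) ^ 2 / 2 - V s / (ξ + 1) ^ 2 / 2 := by
    unfold psiF qF
    field_simp
    ring
  have hCV0 : 0 ≤ CV := (abs_nonneg _).trans (hCV s)
  linarith

theorem PF_diff_bound' {f : ℝ → ℝ} (hf : Continuous f) {u v : ℝ} (huv : u ≤ v) :
    PF ξ R V f u - PF ξ R V f v
      ≤ (Cr + CV) * (v - u) - (QF ξ V f v - QF ξ V f u) / 2 := by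
  have hψc := psi_cont' hξ hR hV hV0 hCr hCV hf
  have hqc := q_cont' hξ hR hV hV0 hCr hCV hf
  have e1 : PF ξ R V f v - PF ξ R V f u = ∫ s in u..v, psiF ξ R V f s :=
    integral_interval_sub_left (hψc.intervalIntegrable 0 v) (hψc.intervalIntegrable 0 u)
  have e2 := QF_diff' hξ hR hV hV0 hCr hCV hf u v
  have mono : (∫ s in u..v, (qF ξ V f s / 2 - (Cr + CV)))
      ≤ ∫ s in u..v, psiF ξ R V f s :=
    integral_mono_on huv (((hqc.div_const 2).sub continuous_const).intervalIntegrable u v)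
      (hψc.intervalIntegrable u v) (fun s _ => psi_lower' hξ hR hV hV0 hCr hCV s)
  have e3 : (∫ s in u..v, (qF ξ V f s / 2 - (Cr + CV)))
      = (∫ s in u..v, qF ξ V f s) / 2 - (Cr + CV) * (v - u) := by
    rw [integral_sub ((hqc.div_const 2).intervalIntegrable u v)
      (intervalIntegrable_const), intervalIntegral.integral_div, intervalIntegral.integral_const, smul_eq_mul]
    ring
  linarith

theorem PF_upper' {f : ℝ → ℝ} (hf : Continuous f) {u v : ℝ} (hu : 0 ≤ u) (huv : u ≤ v)
    (hvT : v ≤ T) :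
    PF ξ R V f u - PF ξ R V f v ≤ (Cr + CV) * T - (QF ξ V f v - QF ξ V f u) / 2 := by
  have h1 := PF_diff_bound' hξ hR hV hV0 hCr hCV hf huv
  have hκ0 : 0 ≤ Cr + CV := by
    have := (abs_nonneg (R 0)).trans (hCr 0)
    have := (abs_nonneg (V 0)).trans (hCV 0)
    linarith
  nlinarith

theorem PF_upper_simple' {f : ℝ → ℝ} (hf : Continuous f) {u v : ℝ} (hu : 0 ≤ u) (huv : u ≤ v)
    (hvT : v ≤ T) :
    PF ξ R V f u - PF ξ R V f v ≤ (Cr + CV) * T := by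
  have h1 := PF_upper' hξ hR hV hV0 hCr hCV hf hu huv hvT
  have h2 := QF_mono' hξ hR hV hV0 hCr hCV hf huv
  linarith

/-- FTC computation of the decay integral. -/
theorem q_exp_integral' {f : ℝ → ℝ} (hf : Continuous f) {t : ℝ} (htT : t ≤ T) :
    (∫ s in t..T, qF ξ V f s * Real.exp ((QF ξ V f t - QF ξ V f s) / 2))
      = 2 - 2 * Real.exp ((QF ξ V f t - QF ξ V f T) / 2) := by
  have hqc := q_cont' hξ hR hV hV0 hCr hCV hf
  have hQc : Continuous (QF ξ V f) := (primitive_contDiff hqc).continuous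
  have hder : ∀ s ∈ uIcc t T,
      HasDerivAt (fun u => -2 * Real.exp ((QF ξ V f t - QF ξ V f u) / 2))
        (qF ξ V f s * Real.exp ((QF ξ V f t - QF ξ V f s) / 2)) s := by
    intro s _
    have h1 : HasDerivAt (QF ξ V f) (qF ξ V f s) s := primitive_hasDerivAt hqc s
    have h2 : HasDerivAt (fun u => (QF ξ V f t - QF ξ V f u) / 2) (-(qF ξ V f s) / 2) s :=
      ((h1.const_sub (QF ξ V f t)).div_const 2)
    have h3 := (h2.exp).const_mul (-2 : ℝ)
    refine h3.congr_deriv ?_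
    ring
  rw [integral_eq_sub_of_hasDerivAt hder
    ((((hqc.mul (((continuous_const.sub hQc).div_const 2).rexp))).intervalIntegrable t T))]
  simp only [sub_self, zero_div, Real.exp_zero]
  ring

theorem Phi_bound' {f : ℝ → ℝ} (hf : Continuous f) (hγ : 0 < γ₀) {t : ℝ}
    (ht : t ∈ Icc 0 T) :
    |MVAux.Phi T ξ γ₀ R V f t| ≤ Mbd T ξ γ₀ Cr CV := by
  obtain ⟨ht0, htT⟩ := ht
  have hc : (0:ℝ) < (ξ + 1) ^ 2 := pow_pos (by linarith) 2
  have hψc := psi_cont' hξ hR hV hV0 hCr hCV hf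
  have hqc := q_cont' hξ hR hV hV0 hCr hCV hf
  have hPc : Continuous (PF ξ R V f) := (primitive_contDiff hψc).continuous
  have hQc : Continuous (QF ξ V f) := (primitive_contDiff hqc).continuous
  have hκ0 : 0 ≤ Cr + CV := by
    have := (abs_nonneg (R 0)).trans (hCr 0)
    have := (abs_nonneg (V 0)).trans (hCV 0)
    linarith
  -- term 1
  have h1 : Real.exp (PF ξ R V f t - PF ξ R V f T) ≤ Real.exp ((Cr + CV) * T) :=
    Real.exp_le_exp.2 (PF_upper_simple' hξ hR hV hV0 hCr hCV hf ht0 htT le_rfl)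
  -- term 3
  have h3 : Real.exp (QF ξ V f t - QF ξ V f T) ≤ 1 := by
    rw [show (1:ℝ) = Real.exp 0 from (Real.exp_zero).symm]
    exact Real.exp_le_exp.2 (by linarith [QF_mono' hξ hR hV hV0 hCr hCV hf htT])
  -- term 2
  have hIpt : ∀ s ∈ Icc t T,
      V s * f s ^ 2 * Real.exp (PF ξ R V f t - PF ξ R V f s)
        ≤ ((ξ + 1) ^ 2 * Real.exp ((Cr + CV) * T)) *
            (qF ξ V f s * Real.exp ((QF ξ V f t - QF ξ V f s) / 2)) := by
    intro s hs
    have e1 : V s * f s ^ 2 = (ξ + 1) ^ 2 * qF ξ V f s := by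
      unfold qF
      field_simp
    have e2 : Real.exp (PF ξ R V f t - PF ξ R V f s)
        ≤ Real.exp ((Cr + CV) * T) * Real.exp ((QF ξ V f t - QF ξ V f s) / 2) := by
      rw [← Real.exp_add]
      apply Real.exp_le_exp.2
      have := PF_upper' hξ hR hV hV0 hCr hCV hf ht0 hs.1 hs.2
      linarith
    calc V s * f s ^ 2 * Real.exp (PF ξ R V f t - PF ξ R V f s)
        = ((ξ + 1) ^ 2 * qF ξ V f s) * Real.exp (PF ξ R V f t - PF ξ R V f s) := by rw [e1]
      _ ≤ ((ξ + 1) ^ 2 * qF ξ V f s) *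
            (Real.exp ((Cr + CV) * T) * Real.exp ((QF ξ V f t - QF ξ V f s) / 2)) :=
          mul_le_mul_of_nonneg_left e2
            (mul_nonneg hc.le (qF_nonneg' hξ hR hV hV0 hCr hCV s))
      _ = ((ξ + 1) ^ 2 * Real.exp ((Cr + CV) * T)) *
            (qF ξ V f s * Real.exp ((QF ξ V f t - QF ξ V f s) / 2)) := by ring
  have hInn : 0 ≤ ∫ s in t..T, V s * f s ^ 2 * Real.exp (PF ξ R V f t - PF ξ R V f s) :=
    integral_nonneg htT fun s _ =>
      mul_nonneg (mul_nonneg (hV0 s) (sq_nonneg _)) (Real.exp_pos _).le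
  have hIbd : (∫ s in t..T, V s * f s ^ 2 * Real.exp (PF ξ R V f t - PF ξ R V f s))
      ≤ (ξ + 1) ^ 2 * Real.exp ((Cr + CV) * T) * 2 := by
    have step1 : (∫ s in t..T, V s * f s ^ 2 * Real.exp (PF ξ R V f t - PF ξ R V f s))
        ≤ ∫ s in t..T, ((ξ + 1) ^ 2 * Real.exp ((Cr + CV) * T)) *
            (qF ξ V f s * Real.exp ((QF ξ V f t - QF ξ V f s) / 2)) := by
      apply integral_mono_on htT _ _ hIpt
      · exact ((hV.mul (hf.pow 2)).mul ((continuous_const.sub hPc).rexp)).intervalIntegrable t T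
      · exact (continuous_const.mul
          (hqc.mul (((continuous_const.sub hQc).div_const 2).rexp))).intervalIntegrable t T
    rw [intervalIntegral.integral_const_mul, q_exp_integral' hξ hR hV hV0 hCr hCV hf htT] at step1
    have : (2:ℝ) - 2 * Real.exp ((QF ξ V f t - QF ξ V f T) / 2) ≤ 2 := by
      have := (Real.exp_pos ((QF ξ V f t - QF ξ V f T) / 2)).le
      linarith
    calc (∫ s in t..T, V s * f s ^ 2 * Real.exp (PF ξ R V f t - PF ξ R V f s))
        ≤ (ξ + 1) ^ 2 * Real.exp ((Cr + CV) * T) *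
            (2 - 2 * Real.exp ((QF ξ V f t - QF ξ V f T) / 2)) := step1
      _ ≤ (ξ + 1) ^ 2 * Real.exp ((Cr + CV) * T) * 2 :=
          mul_le_mul_of_nonneg_left this (mul_nonneg hc.le (Real.exp_pos _).le)
  -- combine
  have hcoeff : (0:ℝ) < ξ / (2 * (ξ + 1) ^ 2) := by positivity
  have hB2 : (ξ / (2 * (ξ + 1) ^ 2)) *
      (∫ s in t..T, V s * f s ^ 2 * Real.exp (PF ξ R V f t - PF ξ R V f s))
      ≤ ξ * Real.exp ((Cr + CV) * T) := by
    have := mul_le_mul_of_nonneg_left hIbd hcoeff.le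
    have heq : (ξ / (2 * (ξ + 1) ^ 2)) * ((ξ + 1) ^ 2 * Real.exp ((Cr + CV) * T) * 2)
        = ξ * Real.exp ((Cr + CV) * T) := by
      field_simp
    linarith
  have hB1 : 0 ≤ (ξ / (2 * (ξ + 1) ^ 2)) *
      (∫ s in t..T, V s * f s ^ 2 * Real.exp (PF ξ R V f t - PF ξ R V f s)) :=
    mul_nonneg hcoeff.le hInn
  have hA1 : 0 < (1 / γ₀) * Real.exp (PF ξ R V f t - PF ξ R V f T) := by positivity
  have hA2 : (1 / γ₀) * Real.exp (PF ξ R V f t - PF ξ R V f T)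
      ≤ (1 / γ₀) * Real.exp ((Cr + CV) * T) :=
    mul_le_mul_of_nonneg_left h1 (by positivity)
  have hC1 : 0 < Real.exp (QF ξ V f t - QF ξ V f T) := Real.exp_pos _
  unfold MVAux.Phi Mbd
  rw [abs_le]
  constructor
  · nlinarith
  · nlinarith

end AnalysisProofs

section LipschitzProof
open MeasureTheory Set intervalIntegral Function MVAux

variable {T ξ γ₀ Cr CV : ℝ} {R V : ℝ → ℝ}
variable (hξ : 0 < ξ) (hR : Continuous R) (hV : Continuous V) (hV0 : ∀ s, 0 ≤ V s)
  (hCr : ∀ s, |R s| ≤ Cr) (hCV : ∀ s, |V s| ≤ CV)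

include hξ hR hV hV0 hCr hCV

theorem Phi_lip' {f g : ℝ → ℝ} {M : ℝ} (hf : Continuous f) (hg : Continuous g)
    (hγ : 0 < γ₀) (hfM : ∀ s, |f s| ≤ M) (hgM : ∀ s, |g s| ≤ M) {t : ℝ}
    (ht : t ∈ Icc 0 T) :
    |MVAux.Phi T ξ γ₀ R V f t - MVAux.Phi T ξ γ₀ R V g t|
      ≤ LLc T ξ γ₀ Cr CV M * ∫ s in t..T, |f s - g s| := by
  obtain ⟨ht0, htT⟩ := ht
  have hc : (0:ℝ) < (ξ + 1) ^ 2 := pow_pos (by linarith) 2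
  have h1c : (1:ℝ) ≤ (ξ + 1) ^ 2 := by nlinarith
  have hM0 : 0 ≤ M := (abs_nonneg (f 0)).trans (hfM 0)
  have hCV0 : 0 ≤ CV := (abs_nonneg _).trans (hCV 0)
  have hCr0 : 0 ≤ Cr := (abs_nonneg _).trans (hCr 0)
  have hC10 : (0:ℝ) ≤ CV * (1 + 2 * M) := by positivity
  have hψf := psi_cont' hξ hR hV hV0 hCr hCV hf
  have hψg := psi_cont' hξ hR hV hV0 hCr hCV hg
  have hqf := q_cont' hξ hR hV hV0 hCr hCV hf
  have hqg := q_cont' hξ hR hV hV0 hCr hCV hg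
  have hPf : Continuous (PF ξ R V f) := (primitive_contDiff hψf).continuous
  have hPg : Continuous (PF ξ R V g) := (primitive_contDiff hψg).continuous
  have hQf : Continuous (QF ξ V f) := (primitive_contDiff hqf).continuous
  have hQg : Continuous (QF ξ V g) := (primitive_contDiff hqg).continuous
  have habs : Continuous fun s => |f s - g s| := (hf.sub hg).abs
  have habs_int : IntervalIntegrable (fun s => |f s - g s|) volume t T :=
    habs.intervalIntegrable t T
  have hDnn : 0 ≤ ∫ s in t..T, |f s - g s| :=
    integral_nonneg htT fun s _ => abs_nonneg _
  -- pointwise differences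
  have dpsi : ∀ s, |psiF ξ R V f s - psiF ξ R V g s|
      ≤ (CV * (1 + 2 * M)) * |f s - g s| := by
    intro s
    have e : psiF ξ R V f s - psiF ξ R V g s
        = V s * ((f s - g s) * (1 + (f s + g s))) / (ξ + 1) ^ 2 := by
      unfold psiF; ring
    rw [e, abs_div, abs_of_pos hc, abs_mul, abs_mul]
    have h1 : |1 + (f s + g s)| ≤ 1 + 2 * M := by
      calc |1 + (f s + g s)| ≤ |(1:ℝ)| + |f s + g s| := abs_add_le _ _
        _ ≤ 1 + (|f s| + |g s|) := by rw [abs_one]; linarith [abs_add_le (f s) (g s)]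
        _ ≤ 1 + 2 * M := by linarith [hfM s, hgM s]
    have h2 : |V s| * (|f s - g s| * |1 + (f s + g s)|)
        ≤ CV * (|f s - g s| * (1 + 2 * M)) := by
      apply mul_le_mul (hCV s) _ (by positivity) hCV0
      exact mul_le_mul_of_nonneg_left h1 (abs_nonneg _)
    calc |V s| * (|f s - g s| * |1 + (f s + g s)|) / (ξ + 1) ^ 2
        ≤ |V s| * (|f s - g s| * |1 + (f s + g s)|) :=
          div_le_self (by positivity) h1c
      _ ≤ CV * (|f s - g s| * (1 + 2 * M)) := h2
      _ = (CV * (1 + 2 * M)) * |f s - g s| := by ring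
  have dq : ∀ s, |qF ξ V f s - qF ξ V g s| ≤ (CV * (1 + 2 * M)) * |f s - g s| := by
    intro s
    have e : qF ξ V f s - qF ξ V g s
        = V s * ((f s - g s) * (f s + g s)) / (ξ + 1) ^ 2 := by
      unfold qF; ring
    rw [e, abs_div, abs_of_pos hc, abs_mul, abs_mul]
    have h1 : |f s + g s| ≤ 1 + 2 * M := by
      have := abs_add_le (f s) (g s)
      linarith [hfM s, hgM s]
    have h2 : |V s| * (|f s - g s| * |f s + g s|)
        ≤ CV * (|f s - g s| * (1 + 2 * M)) := by
      apply mul_le_mul (hCV s) _ (by positivity) hCV0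
      exact mul_le_mul_of_nonneg_left h1 (abs_nonneg _)
    calc |V s| * (|f s - g s| * |f s + g s|) / (ξ + 1) ^ 2
        ≤ |V s| * (|f s - g s| * |f s + g s|) := div_le_self (by positivity) h1c
      _ ≤ CV * (|f s - g s| * (1 + 2 * M)) := h2
      _ = (CV * (1 + 2 * M)) * |f s - g s| := by ring
  -- integrated differences
  have dint : ∀ h : ℝ → ℝ, Continuous h →
      (∀ s, |h s| ≤ (CV * (1 + 2 * M)) * |f s - g s|) →
      ∀ v, t ≤ v → v ≤ T →
      |∫ s in t..v, h s| ≤ (CV * (1 + 2 * M)) * ∫ s in t..T, |f s - g s| := by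
    intro h hh hb v htv hvT
    calc |∫ s in t..v, h s| ≤ ∫ s in t..v, |h s| := abs_integral_le_integral_abs htv
      _ ≤ ∫ s in t..v, (CV * (1 + 2 * M)) * |f s - g s| :=
          integral_mono_on htv (hh.abs.intervalIntegrable _ _)
            ((continuous_const.mul habs).intervalIntegrable _ _) (fun s _ => hb s)
      _ = (CV * (1 + 2 * M)) * ∫ s in t..v, |f s - g s| := integral_const_mul _ _
      _ ≤ (CV * (1 + 2 * M)) * ∫ s in t..T, |f s - g s| := by
          apply mul_le_mul_of_nonneg_left _ hC10
          exact integral_mono_interval (le_refl t) htv hvT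
            (Filter.Eventually.of_forall fun s => abs_nonneg _) habs_int
  have dPF : ∀ v, t ≤ v → v ≤ T →
      |(PF ξ R V f t - PF ξ R V f v) - (PF ξ R V g t - PF ξ R V g v)|
        ≤ (CV * (1 + 2 * M)) * ∫ s in t..T, |f s - g s| := by
    intro v htv hvT
    have e1 : PF ξ R V f v - PF ξ R V f t = ∫ s in t..v, psiF ξ R V f s :=
      integral_interval_sub_left (hψf.intervalIntegrable 0 v) (hψf.intervalIntegrable 0 t)
    have e2 : PF ξ R V g v - PF ξ R V g t = ∫ s in t..v, psiF ξ R V g s :=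
      integral_interval_sub_left (hψg.intervalIntegrable 0 v) (hψg.intervalIntegrable 0 t)
    have e3 : (∫ s in t..v, (psiF ξ R V f s - psiF ξ R V g s))
        = (∫ s in t..v, psiF ξ R V f s) - ∫ s in t..v, psiF ξ R V g s :=
      integral_sub (hψf.intervalIntegrable t v) (hψg.intervalIntegrable t v)
    have e4 : (PF ξ R V f t - PF ξ R V f v) - (PF ξ R V g t - PF ξ R V g v)
        = -(∫ s in t..v, (psiF ξ R V f s - psiF ξ R V g s)) := by
      rw [e3]; linarith
    rw [e4, abs_neg]
    exact dint _ (hψf.sub hψg) (fun s => dpsi s) v htv hvT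
  have dQF : |(QF ξ V f t - QF ξ V f T) - (QF ξ V g t - QF ξ V g T)|
      ≤ (CV * (1 + 2 * M)) * ∫ s in t..T, |f s - g s| := by
    have e1 := QF_diff' hξ hR hV hV0 hCr hCV hf t T
    have e2 := QF_diff' hξ hR hV hV0 hCr hCV hg t T
    have e3 : (∫ s in t..T, (qF ξ V f s - qF ξ V g s))
        = (∫ s in t..T, qF ξ V f s) - ∫ s in t..T, qF ξ V g s :=
      integral_sub (hqf.intervalIntegrable t T) (hqg.intervalIntegrable t T)
    have e4 : (QF ξ V f t - QF ξ V f T) - (QF ξ V g t - QF ξ V g T)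
        = -(∫ s in t..T, (qF ξ V f s - qF ξ V g s)) := by
      rw [e3]; linarith
    rw [e4, abs_neg]
    exact dint _ (hqf.sub hqg) (fun s => dq s) T htT le_rfl
  -- term 1
  have hxf : PF ξ R V f t - PF ξ R V f T ≤ (Cr + CV) * T :=
    PF_upper_simple' hξ hR hV hV0 hCr hCV hf ht0 htT le_rfl
  have hxg : PF ξ R V g t - PF ξ R V g T ≤ (Cr + CV) * T :=
    PF_upper_simple' hξ hR hV hV0 hCr hCV hg ht0 htT le_rfl
  have t1 : |(1 / γ₀) * Real.exp (PF ξ R V f t - PF ξ R V f T)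
        - (1 / γ₀) * Real.exp (PF ξ R V g t - PF ξ R V g T)|
      ≤ (1 / γ₀) * Real.exp ((Cr + CV) * T) *
          ((CV * (1 + 2 * M)) * ∫ s in t..T, |f s - g s|) := by
    rw [← mul_sub, abs_mul, abs_of_pos (by positivity : (0:ℝ) < 1 / γ₀), mul_assoc]
    apply mul_le_mul_of_nonneg_left _ (by positivity : (0:ℝ) ≤ 1 / γ₀)
    calc |Real.exp (PF ξ R V f t - PF ξ R V f T) - Real.exp (PF ξ R V g t - PF ξ R V g T)|
        ≤ Real.exp ((Cr + CV) * T) *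
            |(PF ξ R V f t - PF ξ R V f T) - (PF ξ R V g t - PF ξ R V g T)| :=
          exp_lip hxf hxg
      _ ≤ Real.exp ((Cr + CV) * T) *
            ((CV * (1 + 2 * M)) * ∫ s in t..T, |f s - g s|) :=
          mul_le_mul_of_nonneg_left (dPF T htT le_rfl) (Real.exp_pos _).le
  -- term 3
  have hyf : QF ξ V f t - QF ξ V f T ≤ 0 := by
    linarith [QF_mono' hξ hR hV hV0 hCr hCV hf htT]
  have hyg : QF ξ V g t - QF ξ V g T ≤ 0 := by
    linarith [QF_mono' hξ hR hV hV0 hCr hCV hg htT]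
  have t3 : |Real.exp (QF ξ V f t - QF ξ V f T) - Real.exp (QF ξ V g t - QF ξ V g T)|
      ≤ (CV * (1 + 2 * M)) * ∫ s in t..T, |f s - g s| := by
    have := exp_lip hyf hyg
    rw [Real.exp_zero, one_mul] at this
    exact this.trans dQF
  -- term 2
  have hIf : Continuous fun s => V s * f s ^ 2 *
      Real.exp (PF ξ R V f t - PF ξ R V f s) :=
    (hV.mul (hf.pow 2)).mul ((continuous_const.sub hPf).rexp)
  have hIg : Continuous fun s => V s * g s ^ 2 *
      Real.exp (PF ξ R V g t - PF ξ R V g s) :=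
    (hV.mul (hg.pow 2)).mul ((continuous_const.sub hPg).rexp)
  have hw : ∀ s ∈ Icc t T,
      |V s * f s ^ 2 * Real.exp (PF ξ R V f t - PF ξ R V f s)
        - V s * g s ^ 2 * Real.exp (PF ξ R V g t - PF ξ R V g s)|
      ≤ Real.exp ((Cr + CV) * T) * ((2 * CV * M) * |f s - g s|
          + CV * M ^ 2 * ((CV * (1 + 2 * M)) * ∫ u in t..T, |f u - g u|)) := by
    intro s hs
    have hXf : PF ξ R V f t - PF ξ R V f s ≤ (Cr + CV) * T :=
      PF_upper_simple' hξ hR hV hV0 hCr hCV hf ht0 hs.1 hs.2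
    have hXg : PF ξ R V g t - PF ξ R V g s ≤ (Cr + CV) * T :=
      PF_upper_simple' hξ hR hV hV0 hCr hCV hg ht0 hs.1 hs.2
    have split : V s * f s ^ 2 * Real.exp (PF ξ R V f t - PF ξ R V f s)
          - V s * g s ^ 2 * Real.exp (PF ξ R V g t - PF ξ R V g s)
        = V s * (f s ^ 2 - g s ^ 2) * Real.exp (PF ξ R V f t - PF ξ R V f s)
          + V s * g s ^ 2 * (Real.exp (PF ξ R V f t - PF ξ R V f s)
              - Real.exp (PF ξ R V g t - PF ξ R V g s)) := by ring
    have b1 : |V s * (f s ^ 2 - g s ^ 2) * Real.exp (PF ξ R V f t - PF ξ R V f s)|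
        ≤ CV * (2 * M * |f s - g s|) * Real.exp ((Cr + CV) * T) := by
      rw [abs_mul, abs_mul]
      have hsq : |f s ^ 2 - g s ^ 2| ≤ 2 * M * |f s - g s| := by
        have e : f s ^ 2 - g s ^ 2 = (f s - g s) * (f s + g s) := by ring
        rw [e, abs_mul]
        have : |f s + g s| ≤ 2 * M := by
          have := abs_add_le (f s) (g s); linarith [hfM s, hgM s]
        calc |f s - g s| * |f s + g s| ≤ |f s - g s| * (2 * M) :=
              mul_le_mul_of_nonneg_left this (abs_nonneg _)
          _ = 2 * M * |f s - g s| := by ring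
      have hexp : |Real.exp (PF ξ R V f t - PF ξ R V f s)| ≤ Real.exp ((Cr + CV) * T) := by
        rw [abs_of_pos (Real.exp_pos _)]
        exact Real.exp_le_exp.2 hXf
      apply mul_le_mul _ hexp (abs_nonneg _) (by positivity)
      exact mul_le_mul (hCV s) hsq (abs_nonneg _) hCV0
    have b2 : |V s * g s ^ 2 * (Real.exp (PF ξ R V f t - PF ξ R V f s)
          - Real.exp (PF ξ R V g t - PF ξ R V g s))|
        ≤ CV * M ^ 2 * (Real.exp ((Cr + CV) * T) *
            ((CV * (1 + 2 * M)) * ∫ u in t..T, |f u - g u|)) := by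
      rw [abs_mul, abs_mul]
      apply mul_le_mul
      · apply mul_le_mul (hCV s) _ (abs_nonneg _) hCV0
        rw [abs_pow]
        exact pow_le_pow_left₀ (abs_nonneg _) (hgM s) 2
      · calc |Real.exp (PF ξ R V f t - PF ξ R V f s)
              - Real.exp (PF ξ R V g t - PF ξ R V g s)|
            ≤ Real.exp ((Cr + CV) * T) *
                |(PF ξ R V f t - PF ξ R V f s) - (PF ξ R V g t - PF ξ R V g s)| :=
              exp_lip hXf hXg
          _ ≤ Real.exp ((Cr + CV) * T) *
                ((CV * (1 + 2 * M)) * ∫ u in t..T, |f u - g u|) :=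
              mul_le_mul_of_nonneg_left (dPF s hs.1 hs.2) (Real.exp_pos _).le
      · exact abs_nonneg _
      · positivity
    calc |V s * f s ^ 2 * Real.exp (PF ξ R V f t - PF ξ R V f s)
          - V s * g s ^ 2 * Real.exp (PF ξ R V g t - PF ξ R V g s)|
        ≤ |V s * (f s ^ 2 - g s ^ 2) * Real.exp (PF ξ R V f t - PF ξ R V f s)|
          + |V s * g s ^ 2 * (Real.exp (PF ξ R V f t - PF ξ R V f s)
              - Real.exp (PF ξ R V g t - PF ξ R V g s))| := by
          rw [split]; exact abs_add_le _ _
      _ ≤ Real.exp ((Cr + CV) * T) * ((2 * CV * M) * |f s - g s|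
            + CV * M ^ 2 * ((CV * (1 + 2 * M)) * ∫ u in t..T, |f u - g u|)) := by
          linarith [b1, b2]
  have t2 : |(∫ s in t..T, V s * f s ^ 2 * Real.exp (PF ξ R V f t - PF ξ R V f s))
        - ∫ s in t..T, V s * g s ^ 2 * Real.exp (PF ξ R V g t - PF ξ R V g s)|
      ≤ Real.exp ((Cr + CV) * T) * ((2 * CV * M + CV * M ^ 2 * (CV * (1 + 2 * M)) * T) *
          ∫ s in t..T, |f s - g s|) := by
    rw [← integral_sub (hIf.intervalIntegrable t T) (hIg.intervalIntegrable t T)]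
    calc |∫ s in t..T, (V s * f s ^ 2 * Real.exp (PF ξ R V f t - PF ξ R V f s)
            - V s * g s ^ 2 * Real.exp (PF ξ R V g t - PF ξ R V g s))|
        ≤ ∫ s in t..T, |V s * f s ^ 2 * Real.exp (PF ξ R V f t - PF ξ R V f s)
            - V s * g s ^ 2 * Real.exp (PF ξ R V g t - PF ξ R V g s)| :=
          abs_integral_le_integral_abs htT
      _ ≤ ∫ s in t..T, Real.exp ((Cr + CV) * T) * ((2 * CV * M) * |f s - g s|
            + CV * M ^ 2 * ((CV * (1 + 2 * M)) * ∫ u in t..T, |f u - g u|)) :=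
          integral_mono_on htT ((hIf.sub hIg).abs.intervalIntegrable t T)
            ((continuous_const.mul ((continuous_const.mul habs).add
              continuous_const)).intervalIntegrable t T) hw
      _ = Real.exp ((Cr + CV) * T) * ((2 * CV * M) * (∫ s in t..T, |f s - g s|)
            + (T - t) * (CV * M ^ 2 * ((CV * (1 + 2 * M)) * ∫ u in t..T, |f u - g u|))) := by
          rw [intervalIntegral.integral_const_mul]
          congr 1
          rw [integral_add (f := fun s => 2 * CV * M * |f s - g s|)
            ((continuous_const.mul habs).intervalIntegrable t T)
            intervalIntegrable_const, intervalIntegral.integral_const_mul, intervalIntegral.integral_const,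
            smul_eq_mul]
      _ ≤ Real.exp ((Cr + CV) * T) * ((2 * CV * M + CV * M ^ 2 * (CV * (1 + 2 * M)) * T) *
            ∫ s in t..T, |f s - g s|) := by
          apply mul_le_mul_of_nonneg_left _ (Real.exp_pos _).le
          have hTt : T - t ≤ T := by linarith
          have hX : (0:ℝ) ≤ CV * M ^ 2 * ((CV * (1 + 2 * M)) * ∫ u in t..T, |f u - g u|) :=
            mul_nonneg (by positivity) (mul_nonneg hC10 hDnn)
          have := mul_le_mul_of_nonneg_right hTt hX
          linarith
  -- combine
  have coeffnn : (0:ℝ) ≤ ξ / (2 * (ξ + 1) ^ 2) := by positivity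
  have split : MVAux.Phi T ξ γ₀ R V f t - MVAux.Phi T ξ γ₀ R V g t
      = ((1 / γ₀) * Real.exp (PF ξ R V f t - PF ξ R V f T)
          - (1 / γ₀) * Real.exp (PF ξ R V g t - PF ξ R V g T))
        + (ξ / (2 * (ξ + 1) ^ 2)) *
            ((∫ s in t..T, V s * f s ^ 2 * Real.exp (PF ξ R V f t - PF ξ R V f s))
              - ∫ s in t..T, V s * g s ^ 2 * Real.exp (PF ξ R V g t - PF ξ R V g s))
        + (Real.exp (QF ξ V f t - QF ξ V f T) - Real.exp (QF ξ V g t - QF ξ V g T)) := by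
    unfold MVAux.Phi; ring
  calc |MVAux.Phi T ξ γ₀ R V f t - MVAux.Phi T ξ γ₀ R V g t|
      ≤ |(1 / γ₀) * Real.exp (PF ξ R V f t - PF ξ R V f T)
          - (1 / γ₀) * Real.exp (PF ξ R V g t - PF ξ R V g T)|
        + (ξ / (2 * (ξ + 1) ^ 2)) *
            |(∫ s in t..T, V s * f s ^ 2 * Real.exp (PF ξ R V f t - PF ξ R V f s))
              - ∫ s in t..T, V s * g s ^ 2 * Real.exp (PF ξ R V g t - PF ξ R V g s)|
        + |Real.exp (QF ξ V f t - QF ξ V f T) - Real.exp (QF ξ V g t - QF ξ V g T)| := by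
        rw [split]
        refine (abs_add_le _ _).trans ?_
        have := abs_add_le ((1 / γ₀) * Real.exp (PF ξ R V f t - PF ξ R V f T)
          - (1 / γ₀) * Real.exp (PF ξ R V g t - PF ξ R V g T))
          ((ξ / (2 * (ξ + 1) ^ 2)) *
            ((∫ s in t..T, V s * f s ^ 2 * Real.exp (PF ξ R V f t - PF ξ R V f s))
              - ∫ s in t..T, V s * g s ^ 2 * Real.exp (PF ξ R V g t - PF ξ R V g s)))
        rw [abs_mul, abs_of_nonneg coeffnn] at this
        linarith
    _ ≤ LLc T ξ γ₀ Cr CV M * ∫ s in t..T, |f s - g s| := by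
        have m2 : (ξ / (2 * (ξ + 1) ^ 2)) *
            |(∫ s in t..T, V s * f s ^ 2 * Real.exp (PF ξ R V f t - PF ξ R V f s))
              - ∫ s in t..T, V s * g s ^ 2 * Real.exp (PF ξ R V g t - PF ξ R V g s)|
            ≤ (ξ / (2 * (ξ + 1) ^ 2)) * (Real.exp ((Cr + CV) * T) *
                ((2 * CV * M + CV * M ^ 2 * (CV * (1 + 2 * M)) * T) *
                  ∫ s in t..T, |f s - g s|)) :=
          mul_le_mul_of_nonneg_left t2 coeffnn
        unfold LLc
        nlinarith [t1, t3, m2]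

end LipschitzProof

section SmoothProof
open MeasureTheory Set intervalIntegral Function MVAux

variable {T ξ γ₀ Cr CV : ℝ} {R V : ℝ → ℝ}
variable (hξ : 0 < ξ) (hR : Continuous R) (hV : Continuous V) (hV0 : ∀ s, 0 ≤ V s)
  (hCr : ∀ s, |R s| ≤ Cr) (hCV : ∀ s, |V s| ≤ CV)

include hξ hR hV hV0 hCr hCV

theorem Phi_contDiff' {f : ℝ → ℝ} (hf : Continuous f) :
    ContDiff ℝ 1 (MVAux.Phi T ξ γ₀ R V f) := by
  have hψ := psi_cont' hξ hR hV hV0 hCr hCV hf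
  have hq := q_cont' hξ hR hV hV0 hCr hCV hf
  have hP : ContDiff ℝ 1 (PF ξ R V f) := primitive_contDiff hψ
  have hQ : ContDiff ℝ 1 (QF ξ V f) := primitive_contDiff hq
  have hPc : Continuous (PF ξ R V f) := hP.continuous
  have hW : Continuous fun s => V s * f s ^ 2 * Real.exp (-(PF ξ R V f s)) :=
    (hV.mul (hf.pow 2)).mul (hPc.neg.rexp)
  have hWp : ContDiff ℝ 1
      (fun u => ∫ s in (0:ℝ)..u, V s * f s ^ 2 * Real.exp (-(PF ξ R V f s))) :=
    primitive_contDiff hW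
  have heq : MVAux.Phi T ξ γ₀ R V f = fun u =>
      (1 / γ₀) * Real.exp (PF ξ R V f u - PF ξ R V f T)
      + (ξ / (2 * (ξ + 1) ^ 2)) * (Real.exp (PF ξ R V f u) *
          ((∫ s in (0:ℝ)..T, V s * f s ^ 2 * Real.exp (-(PF ξ R V f s)))
            - ∫ s in (0:ℝ)..u, V s * f s ^ 2 * Real.exp (-(PF ξ R V f s))))
      + Real.exp (QF ξ V f u - QF ξ V f T) - 1 := by
    funext u
    unfold MVAux.Phi
    have e1 : (∫ s in u..T, V s * f s ^ 2 * Real.exp (PF ξ R V f u - PF ξ R V f s))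
        = ∫ s in u..T, Real.exp (PF ξ R V f u) *
            (V s * f s ^ 2 * Real.exp (-(PF ξ R V f s))) := by
      refine integral_congr fun s _ => ?_
      rw [show PF ξ R V f u - PF ξ R V f s = PF ξ R V f u + -(PF ξ R V f s) by ring,
        Real.exp_add]
      ring
    rw [e1, intervalIntegral.integral_const_mul,
      integral_interval_sub_left (hW.intervalIntegrable 0 T) (hW.intervalIntegrable 0 u)]
  rw [heq]
  apply ContDiff.sub _ contDiff_const
  apply ContDiff.add
  apply ContDiff.add
  · exact contDiff_const.mul (hP.sub contDiff_const).exp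
  · exact contDiff_const.mul ((hP.exp).mul (contDiff_const.sub hWp))
  · exact (hQ.sub contDiff_const).exp

theorem exists_fixedPoint' (hT : 0 < T) (hγ : 0 < γ₀) :
    ∃ f : ℝ → ℝ, Continuous f ∧ (∀ t ∈ Icc (0:ℝ) T, f t = MVAux.Phi T ξ γ₀ R V f t) ∧
      ∀ g : ℝ → ℝ, Continuous g → (∀ t ∈ Icc (0:ℝ) T, g t = MVAux.Phi T ξ γ₀ R V g t) →
        EqOn f g (Icc 0 T) := by
  have hM0 : 0 ≤ Mbd T ξ γ₀ Cr CV := by unfold Mbd; positivity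
  have hCV0 : 0 ≤ CV := (abs_nonneg _).trans (hCV 0)
  have hL0 : 0 ≤ LLc T ξ γ₀ Cr CV (Mbd T ξ γ₀ Cr CV) := by
    have hM0' : 0 ≤ Mbd T ξ γ₀ Cr CV := hM0
    unfold LLc
    have h1 : (0:ℝ) < (ξ + 1) ^ 2 := pow_pos (by linarith) 2
    have h2 : 0 ≤ CV * (1 + 2 * Mbd T ξ γ₀ Cr CV) := by positivity
    positivity
  haveI : CompactSpace (Icc (0:ℝ) T) := isCompact_iff_compactSpace.mp isCompact_Icc
  set M := Mbd T ξ γ₀ Cr CV with hMdef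
  set L := LLc T ξ γ₀ Cr CV M with hLdef
  set S : Set C(↥(Icc (0:ℝ) T), ℝ) := {h | ∀ x, |h x| ≤ M} with hSdef
  have hSc : IsClosed S := by
    have hSeq : S = ⋂ x, {h : C(↥(Icc (0:ℝ) T), ℝ) | |h x| ≤ M} := by
      ext h
      simp only [hSdef, Set.mem_setOf_eq, Set.mem_iInter]
    rw [hSeq]
    exact isClosed_iInter fun x => isClosed_le
      (continuous_abs.comp (continuous_eval_const x)) continuous_const
  haveI : CompleteSpace S := hSc.completeSpace_coe
  haveI : Nonempty S := ⟨⟨ContinuousMap.const _ 0, fun x => by simpa using hM0⟩⟩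
  have hext_cont : ∀ h : C(↥(Icc (0:ℝ) T), ℝ), Continuous (IccExtend hT.le h) :=
    fun h => h.continuous.Icc_extend'
  have hext_mem : ∀ (h : S) (x : ℝ),
      |IccExtend hT.le (h.1 : C(↥(Icc (0:ℝ) T), ℝ)) x| ≤ M := fun h x => h.2 _
  have hext_eq : ∀ (h : C(↥(Icc (0:ℝ) T), ℝ)) {x : ℝ} (hx : x ∈ Icc (0:ℝ) T),
      IccExtend hT.le h x = h ⟨x, hx⟩ := fun h {x} hx => IccExtend_of_mem hT.le h hx
  have hPhiCont : ∀ h : S, Continuous (MVAux.Phi T ξ γ₀ R V (IccExtend hT.le h.1)) :=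
    fun h => (Phi_contDiff' hξ hR hV hV0 hCr hCV (hext_cont _)).continuous
  let TT : S → S := fun h =>
    ⟨⟨fun x => MVAux.Phi T ξ γ₀ R V (IccExtend hT.le h.1) x.1,
        (hPhiCont h).comp continuous_subtype_val⟩,
      fun x => Phi_bound' hξ hR hV hV0 hCr hCV (hext_cont _) hγ x.2⟩
  have TTval : ∀ (h : S) (x : ↥(Icc (0:ℝ) T)),
      ((TT h).1 : C(↥(Icc (0:ℝ) T), ℝ)) x
        = MVAux.Phi T ξ γ₀ R V (IccExtend hT.le h.1) x.1 := fun h x => rfl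
  -- iterated Volterra estimate
  have key : ∀ (n : ℕ) (h₁ h₂ : S) (t : ℝ), t ∈ Icc (0:ℝ) T →
      |IccExtend hT.le ((TT^[n] h₁).1 : C(↥(Icc (0:ℝ) T), ℝ)) t
        - IccExtend hT.le ((TT^[n] h₂).1 : C(↥(Icc (0:ℝ) T), ℝ)) t|
        ≤ L ^ n * (T - t) ^ n / n.factorial * dist h₁ h₂ := by
    intro n
    induction n with
    | zero =>
      intro h₁ h₂ t ht
      simp only [iterate_zero, id_eq, pow_zero, Nat.factorial_zero, Nat.cast_one]
      rw [hext_eq _ ht, hext_eq _ ht]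
      have h := ContinuousMap.dist_apply_le_dist (f := (h₁.1 : C(↥(Icc (0:ℝ) T), ℝ)))
        (g := (h₂.1 : C(↥(Icc (0:ℝ) T), ℝ))) ⟨t, ht⟩
      rw [Real.dist_eq] at h
      calc |(h₁.1 : C(↥(Icc (0:ℝ) T), ℝ)) ⟨t, ht⟩ - (h₂.1 : C(↥(Icc (0:ℝ) T), ℝ)) ⟨t, ht⟩|
          ≤ dist h₁.1 h₂.1 := h
        _ = 1 * 1 / 1 * dist h₁ h₂ := by rw [Subtype.dist_eq]; ring
    | succ n IH =>
      intro h₁ h₂ t ht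
      rw [iterate_succ_apply', iterate_succ_apply', hext_eq _ ht, hext_eq _ ht,
        TTval, TTval]
      have hF₁ : Continuous (IccExtend hT.le ((TT^[n] h₁).1 : C(↥(Icc (0:ℝ) T), ℝ))) :=
        hext_cont _
      have hF₂ : Continuous (IccExtend hT.le ((TT^[n] h₂).1 : C(↥(Icc (0:ℝ) T), ℝ))) :=
        hext_cont _
      have step1 := Phi_lip' hξ hR hV hV0 hCr hCV hF₁ hF₂ hγ
        (hext_mem (TT^[n] h₁)) (hext_mem (TT^[n] h₂)) ht
      have intpow : (∫ s in t..T, (T - s) ^ n) = (T - t) ^ (n + 1) / (n + 1) := by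
        have hder : ∀ s ∈ uIcc t T,
            HasDerivAt (fun u => -((T - u) ^ (n + 1)) / ((n : ℝ) + 1)) ((T - s) ^ n) s := by
          intro s _
          have h1 : HasDerivAt (fun u : ℝ => T - u) (-1) s := (hasDerivAt_id s).const_sub T
          have h2 := (h1.pow (n + 1)).neg.div_const ((n : ℝ) + 1)
          refine h2.congr_deriv ?_
          simp only [Nat.add_sub_cancel]
          have hne2 : ((n : ℝ) + 1) ≠ 0 := by positivity
          push_cast
          field_simp
        rw [integral_eq_sub_of_hasDerivAt hder
          (((continuous_const.sub continuous_id).pow n).intervalIntegrable t T)]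
        have hTT : T - T = 0 := sub_self T
        rw [hTT, zero_pow (Nat.succ_ne_zero n)]
        push_cast
        ring
      have IHs : ∀ s ∈ Icc t T,
          |IccExtend hT.le ((TT^[n] h₁).1 : C(↥(Icc (0:ℝ) T), ℝ)) s
            - IccExtend hT.le ((TT^[n] h₂).1 : C(↥(Icc (0:ℝ) T), ℝ)) s|
            ≤ (L ^ n / n.factorial * dist h₁ h₂) * (T - s) ^ n := by
        intro s hs
        calc |IccExtend hT.le ((TT^[n] h₁).1 : C(↥(Icc (0:ℝ) T), ℝ)) s
            - IccExtend hT.le ((TT^[n] h₂).1 : C(↥(Icc (0:ℝ) T), ℝ)) s|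
            ≤ L ^ n * (T - s) ^ n / n.factorial * dist h₁ h₂ :=
              IH h₁ h₂ s ⟨ht.1.trans hs.1, hs.2⟩
          _ = (L ^ n / n.factorial * dist h₁ h₂) * (T - s) ^ n := by ring
      have int2 : (∫ s in t..T,
            |IccExtend hT.le ((TT^[n] h₁).1 : C(↥(Icc (0:ℝ) T), ℝ)) s
              - IccExtend hT.le ((TT^[n] h₂).1 : C(↥(Icc (0:ℝ) T), ℝ)) s|)
          ≤ (L ^ n / n.factorial * dist h₁ h₂) * ((T - t) ^ (n + 1) / (n + 1)) := by
        calc (∫ s in t..T,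
              |IccExtend hT.le ((TT^[n] h₁).1 : C(↥(Icc (0:ℝ) T), ℝ)) s
                - IccExtend hT.le ((TT^[n] h₂).1 : C(↥(Icc (0:ℝ) T), ℝ)) s|)
            ≤ ∫ s in t..T, (L ^ n / n.factorial * dist h₁ h₂) * (T - s) ^ n :=
              integral_mono_on ht.2 ((hF₁.sub hF₂).abs.intervalIntegrable t T)
                ((continuous_const.mul
                  ((continuous_const.sub continuous_id).pow n)).intervalIntegrable t T) IHs
          _ = (L ^ n / n.factorial * dist h₁ h₂) * ∫ s in t..T, (T - s) ^ n :=
              integral_const_mul _ _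
          _ = (L ^ n / n.factorial * dist h₁ h₂) * ((T - t) ^ (n + 1) / (n + 1)) := by
              rw [intpow]
      calc |MVAux.Phi T ξ γ₀ R V (IccExtend hT.le ((TT^[n] h₁).1 : C(↥(Icc (0:ℝ) T), ℝ))) t
            - MVAux.Phi T ξ γ₀ R V (IccExtend hT.le ((TT^[n] h₂).1 : C(↥(Icc (0:ℝ) T), ℝ))) t|
          ≤ L * ∫ s in t..T,
              |IccExtend hT.le ((TT^[n] h₁).1 : C(↥(Icc (0:ℝ) T), ℝ)) s
                - IccExtend hT.le ((TT^[n] h₂).1 : C(↥(Icc (0:ℝ) T), ℝ)) s| := step1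
        _ ≤ L * ((L ^ n / n.factorial * dist h₁ h₂) * ((T - t) ^ (n + 1) / (n + 1))) :=
            mul_le_mul_of_nonneg_left int2 hL0
        _ = L ^ (n + 1) * (T - t) ^ (n + 1) / (n + 1).factorial * dist h₁ h₂ := by
            rw [Nat.factorial_succ]
            have hne : ((n.factorial : ℝ)) ≠ 0 := Nat.cast_ne_zero.2 n.factorial_ne_zero
            have hne2 : ((n : ℝ) + 1) ≠ 0 := by positivity
            push_cast
            field_simp
            ring
  -- contraction of an iterate
  have hT0 : (0:ℝ) ≤ T := hT.le
  have distb : ∀ (n : ℕ) (h₁ h₂ : S),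
      dist (TT^[n] h₁) (TT^[n] h₂) ≤ L ^ n * T ^ n / n.factorial * dist h₁ h₂ := by
    intro n h₁ h₂
    have hC0 : (0:ℝ) ≤ L ^ n * T ^ n / n.factorial * dist h₁ h₂ :=
      mul_nonneg (div_nonneg (mul_nonneg (pow_nonneg hL0 n) (pow_nonneg hT0 n))
        (Nat.cast_nonneg _)) dist_nonneg
    rw [Subtype.dist_eq, ContinuousMap.dist_le hC0]
    intro x
    rw [Real.dist_eq]
    have h := key n h₁ h₂ x.1 x.2
    rw [hext_eq _ x.2, hext_eq _ x.2] at h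
    simp only [Subtype.coe_eta] at h
    refine h.trans ?_
    have h1 : (T - x.1) ^ n ≤ T ^ n :=
      pow_le_pow_left₀ (sub_nonneg.2 x.2.2) (by linarith [x.2.1]) n
    have h2 : L ^ n * (T - x.1) ^ n ≤ L ^ n * T ^ n :=
      mul_le_mul_of_nonneg_left h1 (pow_nonneg hL0 n)
    have h3 : (0:ℝ) < (n.factorial : ℝ) := by exact_mod_cast n.factorial_pos
    exact mul_le_mul_of_nonneg_right ((div_le_div_iff_of_pos_right h3).2 h2) dist_nonneg
  obtain ⟨n, hn⟩ : ∃ n : ℕ, L ^ n * T ^ n / n.factorial < 1 := by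
    have h := FloorSemiring.tendsto_pow_div_factorial_atTop (L * T)
    obtain ⟨n, hn⟩ := (h.eventually (gt_mem_nhds one_pos)).exists
    refine ⟨n, ?_⟩
    rw [show L ^ n * T ^ n = (L * T) ^ n from (mul_pow L T n).symm]
    exact hn
  have hc0 : (0:ℝ) ≤ L ^ n * T ^ n / n.factorial :=
    div_nonneg (mul_nonneg (pow_nonneg hL0 n) (pow_nonneg hT0 n)) (Nat.cast_nonneg _)
  have hlip : LipschitzWith (Real.toNNReal (L ^ n * T ^ n / n.factorial)) (TT^[n]) :=
    LipschitzWith.of_dist_le_mul fun h₁ h₂ => by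
      rw [Real.coe_toNNReal _ hc0]
      exact distb n h₁ h₂
  have hcontr : ContractingWith (Real.toNNReal (L ^ n * T ^ n / n.factorial)) (TT^[n]) :=
    ⟨Real.toNNReal_lt_one.2 hn, hlip⟩
  have hfix : Function.IsFixedPt TT (ContractingWith.fixedPoint (TT^[n]) hcontr) :=
    hcontr.isFixedPt_fixedPoint_iterate
  set xs := ContractingWith.fixedPoint (TT^[n]) hcontr with hxdef
  have hfix' : TT xs = xs := hfix
  refine ⟨IccExtend hT.le (xs.1 : C(↥(Icc (0:ℝ) T), ℝ)), hext_cont _, ?_, ?_⟩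
  · intro t ht
    calc IccExtend hT.le (xs.1 : C(↥(Icc (0:ℝ) T), ℝ)) t
        = (xs.1 : C(↥(Icc (0:ℝ) T), ℝ)) ⟨t, ht⟩ := hext_eq _ ht
      _ = ((TT xs).1 : C(↥(Icc (0:ℝ) T), ℝ)) ⟨t, ht⟩ := by rw [hfix']
      _ = MVAux.Phi T ξ γ₀ R V (IccExtend hT.le (xs.1 : C(↥(Icc (0:ℝ) T), ℝ))) t := rfl
  · intro g hgc hgfp
    have hgB : ∀ x : ↥(Icc (0:ℝ) T), |g x.1| ≤ M := fun x => by
      rw [hgfp x.1 x.2]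
      exact Phi_bound' hξ hR hV hV0 hCr hCV hgc hγ x.2
    have hGmem : (⟨fun x => g x.1, hgc.comp continuous_subtype_val⟩ :
        C(↥(Icc (0:ℝ) T), ℝ)) ∈ S := hgB
    set G : S := ⟨⟨fun x => g x.1, hgc.comp continuous_subtype_val⟩, hGmem⟩ with hGdef
    have hGext : ∀ x ∈ Icc (0:ℝ) T,
        IccExtend hT.le (G.1 : C(↥(Icc (0:ℝ) T), ℝ)) x = g x := fun x hx => by
      rw [hext_eq _ hx]
      rfl
    have hGfix : TT G = G := by
      apply Subtype.ext
      apply ContinuousMap.ext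
      intro x
      show MVAux.Phi T ξ γ₀ R V (IccExtend hT.le (G.1 : C(↥(Icc (0:ℝ) T), ℝ))) x.1 = g x.1
      have hcg := MVAux.Phi_congr (T := T) (ξ := ξ) (γ₀ := γ₀) (r := R) (r' := R)
        (Θ := V) (Θ' := V) (f := IccExtend hT.le (G.1 : C(↥(Icc (0:ℝ) T), ℝ))) (f' := g)
        hT.le (fun _ _ => rfl) (fun _ _ => rfl) hGext x.2
      rw [hcg]
      exact (hgfp x.1 x.2).symm
    have hGx : G = xs := hcontr.fixedPoint_unique ((Function.IsFixedPt.iterate hGfix n))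
    intro t ht
    have h1 : IccExtend hT.le (xs.1 : C(↥(Icc (0:ℝ) T), ℝ)) t
        = (xs.1 : C(↥(Icc (0:ℝ) T), ℝ)) ⟨t, ht⟩ := hext_eq _ ht
    rw [h1, ← hGx]
    rfl

end SmoothProof

/-- Corollary 2: the equation system (40) characterizing the robust
equilibrium investment strategy of the ambiguity-averse mean-variance
investor without skewness preference (the case `φ₀ = 0` of Theorem 4.1)
admits a unique C¹ solution on `[0,T]`; moreover the denominator
`γ₀ Ĥ₂[f](t)` is automatically strictly positive. -/
theorem mean_variance_robust_equation_unique_solution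
    (T γ₀ ξ : ℝ) (hT : 0 < T) (hγ : 0 < γ₀) (hξ : 0 < ξ)
    (r Θ : ℝ → ℝ)
    (hrLip : ∃ K : NNReal, LipschitzOnWith K r (Set.Icc 0 T))
    (hΘLip : ∃ K : NNReal, LipschitzOnWith K Θ (Set.Icc 0 T))
    (hrBdd : ∃ C : ℝ, ∀ t ∈ Set.Icc 0 T, |r t| ≤ C)
    (hΘBdd : ∃ C : ℝ, ∀ t ∈ Set.Icc 0 T, |Θ t| ≤ C)
    (hΘpos : ∀ t ∈ Set.Icc 0 T, 0 ≤ Θ t) :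
    ∃ f : ℝ → ℝ, SolvesMVIE T ξ γ₀ r Θ f ∧
      (∀ t ∈ Set.Icc 0 T, 0 < γ₀ * H2h T ξ r Θ f t) ∧
      ∀ g : ℝ → ℝ, SolvesMVIE T ξ γ₀ r Θ g → Set.EqOn f g (Set.Icc 0 T) := by
  classical
  obtain ⟨Kr, hrL⟩ := hrLip
  obtain ⟨KΘ, hΘL⟩ := hΘLip
  obtain ⟨Cr, hCrB⟩ := hrBdd
  obtain ⟨CV, hCVB⟩ := hΘBdd
  have hrC : ContinuousOn r (Set.Icc 0 T) := hrL.continuousOn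
  have hΘC : ContinuousOn Θ (Set.Icc 0 T) := hΘL.continuousOn
  -- clamp
  have hclmem : ∀ x : ℝ, max 0 (min x T) ∈ Set.Icc (0:ℝ) T :=
    fun x => ⟨le_max_left _ _, max_le hT.le (min_le_right _ _)⟩
  have hclid : ∀ x ∈ Set.Icc (0:ℝ) T, max 0 (min x T) = x := fun x hx => by
    rw [min_eq_left hx.2, max_eq_right hx.1]
  have hclc : Continuous fun x : ℝ => max 0 (min x T) :=
    continuous_const.max (continuous_id.min continuous_const)
  set R : ℝ → ℝ := fun x => r (max 0 (min x T)) with hRdef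
  set V : ℝ → ℝ := fun x => Θ (max 0 (min x T)) with hVdef
  have hR : Continuous R := hrC.comp_continuous hclc hclmem
  have hV : Continuous V := hΘC.comp_continuous hclc hclmem
  have hV0 : ∀ s, 0 ≤ V s := fun s => hΘpos _ (hclmem s)
  have hCr : ∀ s, |R s| ≤ Cr := fun s => hCrB _ (hclmem s)
  have hCV : ∀ s, |V s| ≤ CV := fun s => hCVB _ (hclmem s)
  have hrE : Set.EqOn r R (Set.Icc 0 T) := fun x hx => by
    show r x = r (max 0 (min x T))
    rw [hclid x hx]
  have hΘE : Set.EqOn Θ V (Set.Icc 0 T) := fun x hx => by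
    show Θ x = Θ (max 0 (min x T))
    rw [hclid x hx]
  obtain ⟨f, hfc, hffp, huniq⟩ := exists_fixedPoint' hξ hR hV hV0 hCr hCV hT hγ
  have hPhiEq : ∀ t ∈ Set.Icc (0:ℝ) T,
      MVAux.Phi T ξ γ₀ r Θ f t = MVAux.Phi T ξ γ₀ R V f t := fun t ht =>
    MVAux.Phi_congr hT.le hrE hΘE (fun _ _ => rfl) ht
  refine ⟨f, ⟨?_, ?_⟩, ?_, ?_⟩
  · -- C¹ regularity
    have h1 : ContDiff ℝ 1 (MVAux.Phi T ξ γ₀ R V f) :=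
      Phi_contDiff' hξ hR hV hV0 hCr hCV hfc
    exact (h1.contDiffOn).congr fun t ht => (hffp t ht)
  · -- the equation
    intro t ht
    rw [MVAux.master hγ.ne' hrC hΘC hfc.continuousOn ht, hPhiEq t ht, ← hffp t ht]
    ring
  · -- positivity of the denominator
    intro t ht
    have : 0 < H2h T ξ r Θ f t := Real.exp_pos _
    positivity
  · -- uniqueness
    intro g hg
    obtain ⟨hg1, hg2⟩ := hg
    have hgC : ContinuousOn g (Set.Icc 0 T) := hg1.continuousOn
    set g' : ℝ → ℝ := Set.IccExtend hT.le (Set.restrict (Set.Icc 0 T) g) with hg'def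
    have hg'c : Continuous g' := (ContinuousOn.restrict hgC).Icc_extend'
    have hg'eq : ∀ x ∈ Set.Icc (0:ℝ) T, g' x = g x := fun x hx => by
      rw [hg'def, Set.IccExtend_of_mem _ _ hx]
      rfl
    have hg'fp : ∀ t ∈ Set.Icc (0:ℝ) T, g' t = MVAux.Phi T ξ γ₀ R V g' t := by
      intro t ht
      have hm := MVAux.master (ξ := ξ) hγ.ne' hrC hΘC hgC ht
      have h2 := hg2 t ht
      rw [hm] at h2
      have hne : γ₀ * H2h T ξ r Θ g t ≠ 0 := by
        have : 0 < H2h T ξ r Θ g t := Real.exp_pos _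
        positivity
      have hgt : g t = MVAux.Phi T ξ γ₀ r Θ g t :=
        mul_left_cancel₀ hne (by linear_combination h2)
      rw [hg'eq t ht, hgt]
      exact MVAux.Phi_congr hT.le hrE hΘE (fun x hx => (hg'eq x hx).symm) ht
    have hEq := huniq g' hg'c hg'fp
    intro t ht
    exact (hEq ht).trans (hg'eq t ht)
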